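/- Let K_1, K_2, K_3 be three pairwise disjoint k-dimensional subspaces of F_2^v (k ≥ 3), let L be the set of lines meeting each K_i in exactly one point, and for each i let P_i = {L ∩ K_i : L ∈ L}. Then for each i, the set of points P_i together with 0 is closed under addition, i.e., P_i ∪ {0} forms a subspace of K_i. -/
import Mathlib


open Classical Module Submodule

section Aux

variable {v : ℕ}

private lemma addself (x : Fin v → ZMod 2) : x + x = 0 := by
  ext t
  exact CharTwo.add_self_eq_zero _

private lemma eq_of_add_eq_zero' {x y : Fin v → ZMod 2} (h : x + y = 0) : x = y := by
  rw [← add_zero x, ← addself y, ← add_assoc, h, zero_add]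

private lemma fin3_cases (i j l m : Fin 3) (hij : i ≠ j) (hil : i ≠ l) (hjl : j ≠ l) :
    m = i ∨ m = j ∨ m = l := by
  revert i j l m; decide

private lemma zmod2_cases (s : ZMod 2) : s = 0 ∨ s = 1 := by
  revert s; decide

private lemma exists_ne_zero' {P : Submodule (ZMod 2) (Fin v → ZMod 2)}
    (h : finrank (ZMod 2) P = 1) : ∃ x, x ∈ P ∧ x ≠ 0 := by
  have hP : P ≠ ⊥ := by
    intro hbot
    rw [hbot] at h
    simp at h
  obtain ⟨x, hx, hx0⟩ := Submodule.exists_mem_ne_zero_of_ne_bot hP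
  exact ⟨x, hx, hx0⟩

private lemma indep_pair {x y : Fin v → ZMod 2} (hx : x ≠ 0) (hy : y ≠ 0) (hxy : x ≠ y) :
    LinearIndependent (ZMod 2) ![x, y] := by
  rw [LinearIndependent.pair_iff]
  intro s t hst
  rcases zmod2_cases s with rfl | rfl <;> rcases zmod2_cases t with rfl | rfl <;>
    simp_all
  exact hxy (eq_of_add_eq_zero' hst)

private lemma span_pair_rank_two {x y : Fin v → ZMod 2} (hx : x ≠ 0) (hy : y ≠ 0)
    (hxy : x ≠ y) :
    finrank (ZMod 2) (span (ZMod 2) {x, y} : Submodule (ZMod 2) (Fin v → ZMod 2)) = 2 := by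
  have h := finrank_span_eq_card (indep_pair hx hy hxy)
  have hr : Set.range ![x, y] = {x, y} := by
    ext z
    simp [Matrix.range_cons, Matrix.range_empty]
    tauto
  rw [hr] at h
  simpa using h

private lemma inter_rank_one {W P : Submodule (ZMod 2) (Fin v → ZMod 2)}
    (hW : finrank (ZMod 2) W = 2) {x : Fin v → ZMod 2} (hxW : x ∈ W) (hxP : x ∈ P)
    (hx0 : x ≠ 0) (hnle : ¬ W ≤ P) :
    finrank (ZMod 2) (W ⊓ P : Submodule (ZMod 2) (Fin v → ZMod 2)) = 1 := by
  have hle : W ⊓ P ≤ W := inf_le_left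
  have h2 : finrank (ZMod 2) (W ⊓ P : Submodule (ZMod 2) (Fin v → ZMod 2)) ≤ 2 :=
    (Submodule.finrank_mono hle).trans hW.le
  have hpos : finrank (ZMod 2) (W ⊓ P : Submodule (ZMod 2) (Fin v → ZMod 2)) ≠ 0 := by
    intro h0
    have hbot := Submodule.finrank_eq_zero.mp h0
    have hx : x ∈ W ⊓ P := ⟨hxW, hxP⟩
    rw [hbot] at hx
    exact hx0 hx
  have hne2 : finrank (ZMod 2) (W ⊓ P : Submodule (ZMod 2) (Fin v → ZMod 2)) ≠ 2 := by
    intro h2'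
    have heq := Submodule.eq_of_le_of_finrank_le hle (by rw [h2', hW])
    exact hnle (heq ▸ (inf_le_right : W ⊓ P ≤ P))
  omega

/-- Construction of a line from a ∈ K i, b ∈ K j with a + b ∈ K l. -/
private lemma lineB (K : Fin 3 → Submodule (ZMod 2) (Fin v → ZMod 2))
    (hdisj : ∀ i j, i ≠ j → K i ⊓ K j = ⊥)
    (i j l : Fin 3) (hij : i ≠ j) (hil : i ≠ l) (hjl : j ≠ l)
    {a b : Fin v → ZMod 2} (ha : a ∈ K i) (ha0 : a ≠ 0) (hb : b ∈ K j) (hb0 : b ≠ 0)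
    (hab : a + b ∈ K l) :
    finrank (ZMod 2) (span (ZMod 2) {a, b} : Submodule (ZMod 2) (Fin v → ZMod 2)) = 2 ∧
      ∀ m, finrank (ZMod 2)
        (span (ZMod 2) {a, b} ⊓ K m : Submodule (ZMod 2) (Fin v → ZMod 2)) = 1 := by
  have hne : a ≠ b := by
    intro h; subst h
    have hmem : a ∈ K i ⊓ K j := ⟨ha, hb⟩
    rw [hdisj i j hij] at hmem
    exact ha0 hmem
  have hab0 : a + b ≠ 0 := fun h => hne (eq_of_add_eq_zero' h)
  have hrank := span_pair_rank_two ha0 hb0 hne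
  have haW : a ∈ span (ZMod 2) {a, b} := subset_span (by simp)
  have hbW : b ∈ span (ZMod 2) {a, b} := subset_span (by simp)
  have habW : a + b ∈ span (ZMod 2) {a, b} := add_mem haW hbW
  refine ⟨hrank, fun m => ?_⟩
  rcases fin3_cases i j l m hij hil hjl with rfl | rfl | rfl
  · refine inter_rank_one hrank haW ha ha0 (fun hle => ?_)
    have hmem : b ∈ K j ⊓ K m := ⟨hb, hle hbW⟩
    rw [hdisj j m (Ne.symm hij)] at hmem
    exact hb0 hmem
  · refine inter_rank_one hrank hbW hb hb0 (fun hle => ?_)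
    have hmem : a ∈ K i ⊓ K m := ⟨ha, hle haW⟩
    rw [hdisj i m hij] at hmem
    exact ha0 hmem
  · refine inter_rank_one hrank habW hab hab0 (fun hle => ?_)
    have hmem : a ∈ K i ⊓ K m := ⟨ha, hle haW⟩
    rw [hdisj i m hil] at hmem
    exact ha0 hmem

/-- Structure of a line in L through a point of K i. -/
private lemma lineA (K : Fin 3 → Submodule (ZMod 2) (Fin v → ZMod 2))
    (hdisj : ∀ i j, i ≠ j → K i ⊓ K j = ⊥)
    {W : Submodule (ZMod 2) (Fin v → ZMod 2)} (hW2 : finrank (ZMod 2) W = 2)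
    (hWK : ∀ m, finrank (ZMod 2) (W ⊓ K m : Submodule (ZMod 2) (Fin v → ZMod 2)) = 1)
    (i j l : Fin 3) (hij : i ≠ j) (hil : i ≠ l) (hjl : j ≠ l)
    {x : Fin v → ZMod 2} (hxW : x ∈ W) (hxi : x ∈ K i) (hx0 : x ≠ 0) :
    ∃ b, b ∈ K j ∧ b ≠ 0 ∧ x + b ∈ K l := by
  obtain ⟨b, hbm, hb0⟩ := exists_ne_zero' (hWK j)
  obtain ⟨c, hcm, hc0⟩ := exists_ne_zero' (hWK l)
  obtain ⟨hbW, hbK⟩ := hbm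
  obtain ⟨hcW, hcK⟩ := hcm
  have hxb : x ≠ b := by
    intro h; subst h
    have hmem : x ∈ K i ⊓ K j := ⟨hxi, hbK⟩
    rw [hdisj i j hij] at hmem; exact hx0 hmem
  have hcx : c ≠ x := by
    intro h; subst h
    have hmem : c ∈ K i ⊓ K l := ⟨hxi, hcK⟩
    rw [hdisj i l hil] at hmem; exact hc0 hmem
  have hcb : c ≠ b := by
    intro h; subst h
    have hmem : c ∈ K j ⊓ K l := ⟨hbK, hcK⟩
    rw [hdisj j l hjl] at hmem; exact hc0 hmem
  have hle : span (ZMod 2) {x, b} ≤ W := by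
    rw [span_le]
    rintro z (rfl | rfl)
    · exact hxW
    · exact hbW
  have hspan := span_pair_rank_two hx0 hb0 hxb
  have hWeq : span (ZMod 2) {x, b} = W :=
    Submodule.eq_of_le_of_finrank_le hle (by rw [hspan, hW2])
  have hc' : c ∈ span (ZMod 2) {x, b} := hWeq ▸ hcW
  rw [Submodule.mem_span_pair] at hc'
  obtain ⟨s, t, hst⟩ := hc'
  have hcxb : c = x + b := by
    rcases zmod2_cases s with rfl | rfl <;> rcases zmod2_cases t with rfl | rfl <;>
      simp only [zero_smul, one_smul, zero_add, add_zero] at hst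
    · exact absurd hst.symm hc0
    · exact absurd hst.symm hcb
    · exact absurd hst.symm hcx
    · exact hst.symm
  exact ⟨b, hbK, hb0, hcxb ▸ hcK⟩

private lemma closure_lemma (K : Fin 3 → Submodule (ZMod 2) (Fin v → ZMod 2))
    (hdisj : ∀ i j, i ≠ j → K i ⊓ K j = ⊥)
    (L : Set (Submodule (ZMod 2) (Fin v → ZMod 2)))
    (hL : L = {W : Submodule (ZMod 2) (Fin v → ZMod 2) | finrank (ZMod 2) ↥W = 2 ∧
      ∀ i, finrank (ZMod 2) ↥(W ⊓ K i) = 1})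
    (i j l : Fin 3) (hij : i ≠ j) (hil : i ≠ l) (hjl : j ≠ l)
    {x y : Fin v → ZMod 2} (hx : x ∈ K i) (hx0 : x ≠ 0) (hy : y ∈ K i) (hy0 : y ≠ 0)
    (hxy : x ≠ y) (hWx : ∃ W ∈ L, x ∈ W) (hWy : ∃ W ∈ L, y ∈ W) :
    x + y ≠ 0 ∧ x + y ∈ K i ∧ ∃ W ∈ L, x + y ∈ W := by
  subst hL
  obtain ⟨W, ⟨hW2, hWK⟩, hxW⟩ := hWx
  obtain ⟨W', ⟨hW'2, hW'K⟩, hyW'⟩ := hWy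
  obtain ⟨b, hbK, hb0, hcK⟩ := lineA K hdisj hW2 hWK i j l hij hil hjl hxW hx hx0
  obtain ⟨b', hb'K, hb'0, hc'K⟩ := lineA K hdisj hW'2 hW'K i j l hij hil hjl hyW' hy hy0
  have hxy0 : x + y ≠ 0 := fun h => hxy (eq_of_add_eq_zero' h)
  have hbb' : b ≠ b' := by
    intro h; subst h
    have h1 : (x + b) + (y + b) ∈ K l := add_mem hcK hc'K
    have h2 : (x + b) + (y + b) = x + y := by
      have h3 : (x + b) + (y + b) = (x + y) + (b + b) := by ring
      rw [h3, addself, add_zero]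
    rw [h2] at h1
    have hmem : x + y ∈ K i ⊓ K l := ⟨add_mem hx hy, h1⟩
    rw [hdisj i l hil] at hmem
    exact hxy0 hmem
  have hB0 : b + b' ≠ 0 := fun h => hbb' (eq_of_add_eq_zero' h)
  have hBK : b + b' ∈ K j := add_mem hbK hb'K
  have hsum : (x + y) + (b + b') ∈ K l := by
    have h3 : (x + y) + (b + b') = (x + b) + (y + b') := by ring
    rw [h3]
    exact add_mem hcK hc'K
  obtain ⟨hr2, hr1⟩ := lineB K hdisj i j l hij hil hjl (add_mem hx hy) hxy0 hBK hB0 hsum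
  exact ⟨hxy0, add_mem hx hy,
    ⟨span (ZMod 2) {x + y, b + b'}, ⟨hr2, hr1⟩, subset_span (by simp)⟩⟩

end Aux

/-- For three pairwise disjoint k-spaces K₁, K₂, K₃ (k ≥ 3) in F_2^v and the
set L of lines meeting each Kᵢ in exactly one point, the intersection points
{L ∩ Kᵢ : L ∈ L} together with 0 form a subspace of Kᵢ. -/
theorem transversal_points_form_subspace (v k : ℕ) (hk : 3 ≤ k)
    (K : Fin 3 → Submodule (ZMod 2) (Fin v → ZMod 2))
    (hdim : ∀ i, finrank (ZMod 2) ↥(K i) = k)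
    (hdisj : ∀ i j, i ≠ j → K i ⊓ K j = ⊥)
    (L : Set (Submodule (ZMod 2) (Fin v → ZMod 2)))
    (hL : L = {W : Submodule (ZMod 2) (Fin v → ZMod 2) | finrank (ZMod 2) ↥W = 2 ∧
      ∀ i, finrank (ZMod 2) ↥(W ⊓ K i) = 1}) :
    ∀ i, ∃ S : Submodule (ZMod 2) (Fin v → ZMod 2), S ≤ K i ∧
      (S : Set (Fin v → ZMod 2)) =
        {x | x ≠ 0 ∧ x ∈ K i ∧ ∃ W ∈ L, x ∈ W} ∪ {0} := by
  intro i
  obtain ⟨j, l, hij, hil, hjl⟩ : ∃ j l, i ≠ j ∧ i ≠ l ∧ j ≠ l := by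
    revert i; decide
  refine ⟨{
      carrier := {x | x ≠ 0 ∧ x ∈ K i ∧ ∃ W ∈ L, x ∈ W} ∪ {0}
      zero_mem' := Or.inr rfl
      add_mem' := ?_
      smul_mem' := ?_ }, ?_, rfl⟩
  · rintro a b (⟨ha0, haK, hWa⟩ | rfl) (⟨hb0, hbK, hWb⟩ | rfl)
    · by_cases hab : a = b
      · subst hab
        exact Or.inr (addself a)
      · exact Or.inl (closure_lemma K hdisj L hL i j l hij hil hjl haK ha0 hbK hb0 hab
          hWa hWb)
    · rw [add_zero]
      exact Or.inl ⟨ha0, haK, hWa⟩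
    · rw [zero_add]
      exact Or.inl ⟨hb0, hbK, hWb⟩
    · rw [add_zero]
      exact Or.inr rfl
  · intro c x hx
    rcases zmod2_cases c with rfl | rfl
    · rw [zero_smul]
      exact Or.inr rfl
    · rw [one_smul]
      exact hx
  · rintro x (⟨_, hK, _⟩ | rfl)
    · exact hK
    · exact (K i).zero_mem
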